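/- Let A be an l × n matrix with integer entries and columns a_1, ..., a_n ∈ ℤ^l. The following are equivalent: (1) for every IP-set Y ⊆ ℕ and every finite coloring of Y, there exist x_1, ..., x_n ∈ Y, all of the same color, with x_1 a_1 + ⋯ + x_n a_n = 0 (the zero vector); (2) there exist m ∈ ℕ and subsets I_1, ..., I_m ⊆ {1,...,n} such that I_1 ∪ ⋯ ∪ I_m = {1,...,n} and for every j ∈ {1,...,m}, Σ_{i ∈ I_j} a_i = 0. -/

import Mathlib

/-- `FSk k x` is the set of all finite sums `∑ εᵢ xᵢ` with each `εᵢ ∈ {0,…,k-1}`,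
excluding `0`.  For `k = 2` this is the usual set `FS` of finite sums. -/
def FSk (k : ℕ) (x : ℕ → ℕ) : Set ℕ :=
  {s | ∃ n : ℕ, ∃ ε : Fin n → ℕ, (∀ i, ε i < k) ∧ s = ∑ i, ε i * x i} \ {0}

/-- A `k`-IP-set; for `k = 2` this is an IP-set. -/
def IsKIPSet (k : ℕ) (A : Set ℕ) : Prop :=
  ∃ x : ℕ → ℕ, StrictMono x ∧ (∀ i, 0 < x i) ∧ FSk k x ⊆ A

open Finset

/-- every element of `Hindman.FS a` is a finite sum over a nonempty finset of indices -/
lemma FS_rep {a : Stream' ℕ} {y : ℕ} (h : y ∈ Hindman.FS a) :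
    ∃ F : Finset ℕ, F.Nonempty ∧ y = ∑ j ∈ F, a.get j := by
  induction h with
  | head' a => exact ⟨{0}, ⟨0, by simp⟩, by simp⟩
  | tail' a m h ih =>
      obtain ⟨F, hF, hsum⟩ := ih
      refine ⟨F.image (· + 1), hF.image _, ?_⟩
      rw [Finset.sum_image (by intro x _ y _ h; dsimp only at h; omega)]
      exact hsum
  | cons' a m h ih =>
      obtain ⟨F, hF, hsum⟩ := ih
      refine ⟨insert 0 (F.image (· + 1)), ⟨0, by simp⟩, ?_⟩
      rw [Finset.sum_insert (by simp)]
      rw [Finset.sum_image (by intro x _ y _ h; dsimp only at h; omega)]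
      rw [hsum]; rfl

/-- digit uniqueness -/
lemma digit_zero (b : ℕ) (N : ℕ) (c : ℕ → ℤ) (hb : ∀ s, 2 * |c s| < b)
    (h : ∑ s ∈ range N, c s * (b : ℤ) ^ s = 0) : ∀ s < N, c s = 0 := by
  induction N generalizing c with
  | zero => omega
  | succ N ih =>
      have hb2 : (1:ℤ) ≤ b := by
        have h1 := hb 0
        have h2 : (0:ℤ) ≤ |c 0| := abs_nonneg _
        omega
      have hre : ∑ s ∈ range (N+1), c s * (b:ℤ)^s
          = c 0 + (b:ℤ) * ∑ s ∈ range N, c (s+1) * (b:ℤ)^s := by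
        rw [Finset.sum_range_succ', Finset.mul_sum]
        simp only [pow_succ, pow_zero, mul_one]
        rw [add_comm]
        congr 1
        exact Finset.sum_congr rfl fun i _ => by ring
      rw [hre] at h
      have hdvd : (b:ℤ) ∣ c 0 := ⟨-(∑ s ∈ range N, c (s+1) * (b:ℤ)^s), by linarith⟩
      have hc0 : c 0 = 0 := Int.eq_zero_of_abs_lt_dvd hdvd (by have := hb 0; omega)
      have hrest : ∑ s ∈ range N, c (s+1) * (b:ℤ)^s = 0 := by
        rw [hc0] at h
        have hbne : (b:ℤ) ≠ 0 := by omega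
        have h3 := mul_eq_zero.mp (by linarith : (b:ℤ) * ∑ s ∈ range N, c (s+1) * (b:ℤ)^s = 0)
        tauto
      intro s hs
      rcases Nat.eq_zero_or_pos s with rfl | hpos
      · exact hc0
      · obtain ⟨s', rfl⟩ := Nat.exists_eq_succ_of_ne_zero (by omega : s ≠ 0)
        exact ih (fun s => c (s+1)) (fun s => hb (s+1)) hrest s' (by omega)

/-- finite sums over nonempty finsets of a positive sequence are in FSk 2 -/
lemma sum_mem_FSk (x : ℕ → ℕ) (hpos : ∀ i, 0 < x i) (F : Finset ℕ) (hF : F.Nonempty) :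
    ∑ j ∈ F, x j ∈ FSk 2 x := by
  constructor
  · refine ⟨F.sup id + 1, fun s => if s.val ∈ F then 1 else 0, fun i => by dsimp only; split <;> omega, ?_⟩
    rw [Fin.sum_univ_eq_sum_range (fun s => (if s ∈ F then 1 else 0) * x s)]
    have hsub : F ⊆ range (F.sup id + 1) := fun s hs => by
      simp only [mem_range]
      exact Nat.lt_succ_of_le (Finset.le_sup (f := id) hs)
    simp only [ite_mul, one_mul, zero_mul]
    rw [Finset.sum_ite_mem, Finset.inter_eq_right.mpr hsub]
  · intro h
    simp only [Set.mem_singleton_iff] at h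
    have : 0 < ∑ j ∈ F, x j := Finset.sum_pos (fun i _ => hpos i) hF
    omega

/-- Rado's theorem on IP-sets: the system `A x = 0` (with columns `aᵢ = A · i`) has a
monochromatic solution for every finite coloring of any IP-set iff there are sets
`I₁,…,I_m` covering `{1,…,n}` with `∑_{i ∈ I_j} aᵢ = 0` for every `j`. -/
theorem stmt6 (l n : ℕ) (A : Matrix (Fin l) (Fin n) ℤ) :
    (∀ Y : Set ℕ, IsKIPSet 2 Y → ∀ (r : ℕ) (c : ℕ → Fin r),
      ∃ x : Fin n → ℕ, (∀ i, x i ∈ Y) ∧ (∀ i i', c (x i) = c (x i')) ∧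
        ∀ t : Fin l, ∑ i, (x i : ℤ) * A t i = 0) ↔
    (∃ m : ℕ, 0 < m ∧ ∃ I : Fin m → Finset (Fin n),
      (∀ i : Fin n, ∃ j, i ∈ I j) ∧
      ∀ j, ∀ t : Fin l, ∑ i ∈ I j, A t i = 0) := by
  constructor
  · intro H
    set B : ℕ := ∑ t : Fin l, ∑ i : Fin n, (A t i).natAbs with hB
    set b : ℕ := 2 * B + 2 with hbdef
    have hb2 : 2 ≤ b := by omega
    have hmono : StrictMono (fun s => b ^ s) :=
      fun s s' h => Nat.pow_lt_pow_right (by omega) h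
    have hppos : ∀ s, 0 < b ^ s := fun s => Nat.pow_pos (n := s) (by omega)
    obtain ⟨x, hxY, -, hxeq⟩ := H (FSk 2 (fun s => b ^ s))
      ⟨_, hmono, hppos, subset_rfl⟩ 1 (fun _ => 0)
    choose ni ε hε hrep using fun i => (hxY i).1
    set e : Fin n → ℕ → ℕ := fun i s => if h : s < ni i then ε i ⟨s, h⟩ else 0 with hedef
    have helt : ∀ i s, e i s ≤ 1 := by
      intro i s
      simp only [hedef]
      split
      · exact Nat.lt_succ_iff.mp (hε i _)
      · omega
    set N : ℕ := (Finset.univ.sup ni) + 1 with hN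
    have hniN : ∀ i, ni i ≤ N := fun i => le_trans (Finset.le_sup (mem_univ i)) (by omega)
    have hxrep : ∀ i, x i = ∑ s ∈ range N, e i s * b ^ s := by
      intro i
      rw [hrep i]
      have h1 : ∑ s : Fin (ni i), ε i s * b ^ (s : ℕ)
          = ∑ s ∈ range (ni i), e i s * b ^ s := by
        rw [← Fin.sum_univ_eq_sum_range (fun s => e i s * b ^ s)]
        refine Finset.sum_congr rfl fun s _ => ?_
        congr 1
        simp only [hedef, dif_pos s.isLt]
      rw [h1]
      have hle : ni i ≤ univ.sup ni := Finset.le_sup (mem_univ i)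
      refine Finset.sum_subset (by intro s hs; simp only [mem_range] at *; omega) ?_
      intro s _ hs
      simp only [mem_range] at hs
      have : ¬ s < ni i := hs
      simp only [hedef, dif_neg this, zero_mul]
    have key : ∀ t, ∀ s < N, (∑ i, (e i s : ℤ) * A t i) = 0 := by
      intro t
      refine digit_zero b N _ ?_ ?_
      · intro s
        have h1 : |∑ i, (e i s : ℤ) * A t i| ≤ ∑ i, |A t i| := by
          refine le_trans (Finset.abs_sum_le_sum_abs _ _) ?_
          refine Finset.sum_le_sum fun i _ => ?_
          rw [abs_mul]
          have : |(e i s : ℤ)| ≤ 1 := by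
            rw [Int.abs_natCast]; exact_mod_cast helt i s
          nlinarith [abs_nonneg (A t i)]
        have h2 : ∑ i, |A t i| ≤ (B : ℤ) := by
          rw [hB]
          push_cast
          refine le_trans ?_ (Finset.single_le_sum (f := fun t => ∑ i, |A t i|)
            (fun t _ => Finset.sum_nonneg fun i _ => abs_nonneg _) (mem_univ t))
          refine le_of_eq (Finset.sum_congr rfl fun i _ => ?_)
          rw [Int.abs_eq_natAbs]
        have : (b : ℤ) = 2 * B + 2 := by rw [hbdef]; push_cast; ring
        rw [this]
        linarith
      · have := hxeq t
        calc ∑ s ∈ range N, (∑ i, (e i s : ℤ) * A t i) * (b:ℤ)^s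
            = ∑ i, ∑ s ∈ range N, ((e i s : ℤ) * (b:ℤ)^s) * A t i := by
              rw [Finset.sum_comm]
              refine Finset.sum_congr rfl fun s _ => ?_
              rw [Finset.sum_mul]
              exact Finset.sum_congr rfl fun i _ => by ring
          _ = ∑ i, (x i : ℤ) * A t i := by
              refine Finset.sum_congr rfl fun i _ => ?_
              rw [← Finset.sum_mul]
              congr 1
              rw [hxrep i]
              push_cast
              rfl
          _ = 0 := hxeq t
    refine ⟨N, by omega, fun j => univ.filter (fun i => e i j.val = 1), ?_, ?_⟩
    · intro i
      have hxne : x i ≠ 0 := fun h0 => (hxY i).2 (by simp [h0])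
      have : ∃ s ∈ range N, e i s * b ^ s ≠ 0 := by
        by_contra hc
        push_neg at hc
        exact hxne (by rw [hxrep i]; exact Finset.sum_eq_zero hc)
      obtain ⟨s, hs, hsne⟩ := this
      simp only [mem_range] at hs
      refine ⟨⟨s, hs⟩, ?_⟩
      simp only [mem_filter, mem_univ, true_and]
      have : e i s ≠ 0 := fun h => hsne (by rw [h]; ring)
      have := helt i s
      omega
    · intro j t
      have h0 := key t j.val j.isLt
      have : ∑ i ∈ univ.filter (fun i => e i j.val = 1), A t i
          = ∑ i, (e i (j:ℕ) : ℤ) * A t i := by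
        rw [Finset.sum_filter]
        refine Finset.sum_congr rfl fun i _ => ?_
        have := helt i j.val
        interval_cases h : e i (j:ℕ) <;> simp
      rw [this, h0]
  · rintro ⟨m, hm, I, hcov, hsum⟩ Y ⟨xs, hmono, hpos, hsub⟩ r c
    set a : Stream' ℕ := xs with ha
    have hFSa : Hindman.FS a ⊆ Y := by
      intro y hy
      obtain ⟨F, hF, rfl⟩ := FS_rep hy
      exact hsub (sum_mem_FSk xs hpos F hF)
    obtain ⟨C, hCmem, bb, hbb⟩ := Hindman.FS_partition_regular a
      (Set.range (fun k : Fin r => {y | y ∈ Hindman.FS a ∧ c y = k}))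
      (Set.finite_range _)
      (fun y hy => ⟨_, ⟨c y, rfl⟩, hy, rfl⟩)
    obtain ⟨k, rfl⟩ := hCmem
    -- define x
    set J : Fin n → Finset ℕ :=
      fun i => (univ.filter (fun j : Fin m => i ∈ I j)).image Fin.val with hJ
    have hJne : ∀ i, (J i).Nonempty := by
      intro i
      obtain ⟨j, hj⟩ := hcov i
      exact ⟨j.val, Finset.mem_image_of_mem _ (by simp [hj])⟩
    refine ⟨fun i => ∑ j ∈ J i, bb.get j, ?_, ?_, ?_⟩
    · intro i
      exact hFSa (hbb (Hindman.FS.finset_sum bb (J i) (hJne i))).1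
    · intro i i'
      have h1 := (hbb (Hindman.FS.finset_sum bb (J i) (hJne i))).2
      have h2 := (hbb (Hindman.FS.finset_sum bb (J i') (hJne i'))).2
      rw [h1, h2]
    · intro t
      have hxi : ∀ i : Fin n, ((∑ j ∈ J i, bb.get j : ℕ) : ℤ)
          = ∑ j : Fin m, (if i ∈ I j then (bb.get j.val : ℤ) else 0) := by
        intro i
        push_cast
        rw [hJ]
        rw [Finset.sum_image (by intro p _ q _ h; exact Fin.val_injective h)]
        rw [Finset.sum_filter]
      calc ∑ i, ((∑ j ∈ J i, bb.get j : ℕ) : ℤ) * A t i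
          = ∑ i, ∑ j : Fin m, (if i ∈ I j then (bb.get j.val : ℤ) * A t i else 0) := by
            refine Finset.sum_congr rfl fun i _ => ?_
            rw [hxi i, Finset.sum_mul]
            exact Finset.sum_congr rfl fun j _ => by split <;> simp
        _ = ∑ j : Fin m, (bb.get j.val : ℤ) * ∑ i ∈ I j, A t i := by
            rw [Finset.sum_comm]
            refine Finset.sum_congr rfl fun j _ => ?_
            rw [Finset.mul_sum]
            rw [Finset.sum_ite_mem, Finset.univ_inter]
        _ = 0 := by
            refine Finset.sum_eq_zero fun j _ => ?_
            rw [hsum j t, mul_zero]
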